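/- Let B and Y be bimonoids in M with B cocommutative, and let k : Y → B be a bimonoid morphism satisfying (k⊗1_Y)∘δ_Y = (k⊗1_Y)∘c∘δ_Y. Let j : E → (Y⊗B)⊗(Y⊗B) be the equalizer of the two morphisms (Y⊗B)⊗(Y⊗B) → (Y⊗B)⊗B⊗(Y⊗B) given by (1_{Y⊗B}⊗(ε_Y⊗1_B)⊗1_{Y⊗B})∘(δ_{Y⊗B}⊗1_{Y⊗B}) and (1_{Y⊗B}⊗(m_B∘(k⊗1_B))⊗1_{Y⊗B})∘(1_{Y⊗B}⊗δ_{Y⊗B}), where δ_{Y⊗B} := (1_Y⊗c_{Y,B}⊗1_B)∘(δ_Y⊗δ_B). Then the morphism (1_Y⊗ε_B⊗1_Y⊗1_B)∘j : E → Y⊗Y⊗B is an isomorphism. -/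

import Mathlib

open CategoryTheory Category MonoidalCategory Limits

universe v u

variable {C : Type u} [Category.{v} C] [MonoidalCategory C]

/-- The middle-four interchange `(W ⊗ X) ⊗ (Y ⊗ Z) ⟶ (W ⊗ Y) ⊗ (X ⊗ Z)`,
i.e. `1 ⊗ c ⊗ 1` with the (suppressed) coherence isomorphisms inserted. -/
def mid4 [BraidedCategory C] (W X Y Z : C) :
    (W ⊗ X) ⊗ (Y ⊗ Z) ⟶ (W ⊗ Y) ⊗ (X ⊗ Z) :=
  (α_ W X (Y ⊗ Z)).hom ≫ (W ◁ (α_ X Y Z).inv) ≫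
    (W ◁ ((β_ X Y).hom ▷ Z)) ≫ (W ◁ (α_ Y X Z).hom) ≫ (α_ W Y (X ⊗ Z)).inv

/-- A monoid structure `(A, m, u)` on the object `A`. -/
structure MonObj' (A : C) where
  mul : A ⊗ A ⟶ A
  one : 𝟙_ C ⟶ A
  one_mul : (one ▷ A) ≫ mul = (λ_ A).hom
  mul_one : (A ◁ one) ≫ mul = (ρ_ A).hom
  mul_assoc : (mul ▷ A) ≫ mul = (α_ A A A).hom ≫ (A ◁ mul) ≫ mul

/-- A comonoid structure `(A, δ, ε)` on the object `A`. -/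
structure ComonObj' (A : C) where
  comul : A ⟶ A ⊗ A
  counit : A ⟶ 𝟙_ C
  counit_comul : comul ≫ (counit ▷ A) = (λ_ A).inv
  comul_counit : comul ≫ (A ◁ counit) = (ρ_ A).inv
  comul_assoc : comul ≫ (comul ▷ A) ≫ (α_ A A A).hom = comul ≫ (A ◁ comul)

/-- A bimonoid structure on the object `A`: a monoid and comonoid structure such that
the comultiplication and counit are monoid morphisms (`A ⊗ A` carrying the multiplication
`(m ⊗ m) ∘ (1 ⊗ c ⊗ 1)` and unit `u ⊗ u`). -/
structure BimonObj' [BraidedCategory C] (A : C) extends MonObj' A, ComonObj' A where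
  mul_comul : mul ≫ comul = (comul ⊗ₘ comul) ≫ mid4 A A A A ≫ (mul ⊗ₘ mul)
  one_comul : one ≫ comul = (λ_ (𝟙_ C)).inv ≫ (one ⊗ₘ one)
  mul_counit : mul ≫ counit = (counit ⊗ₘ counit) ≫ (λ_ (𝟙_ C)).hom
  one_counit : one ≫ counit = 𝟙 (𝟙_ C)

/-- `f` is a morphism of monoids. -/
def IsMonHom {A B : C} (MA : MonObj' A) (MB : MonObj' B) (f : A ⟶ B) : Prop :=
  MA.mul ≫ f = (f ⊗ₘ f) ≫ MB.mul ∧ MA.one ≫ f = MB.one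

/-- `f` is a morphism of comonoids. -/
def IsComonHom {A B : C} (MA : ComonObj' A) (MB : ComonObj' B) (f : A ⟶ B) : Prop :=
  f ≫ MB.comul = MA.comul ≫ (f ⊗ₘ f) ∧ f ≫ MB.counit = MA.counit

/-- `f` is a morphism of bimonoids (preserves all four structure maps). -/
def IsBimonHom [BraidedCategory C] {A B : C} (MA : BimonObj' A) (MB : BimonObj' B)
    (f : A ⟶ B) : Prop :=
  IsMonHom MA.toMonObj' MB.toMonObj' f ∧ IsComonHom MA.toComonObj' MB.toComonObj' f

/-- `z` is an antipode for the bimonoid `M`, i.e. `M` is a Hopf monoid. -/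
def IsAntipode [BraidedCategory C] {B : C} (M : BimonObj' B) (z : B ⟶ B) : Prop :=
  M.comul ≫ (z ▷ B) ≫ M.mul = M.counit ≫ M.one ∧
    M.comul ≫ (B ◁ z) ≫ M.mul = M.counit ≫ M.one

/-- A comonoid is cocommutative when `c ∘ δ = δ`. -/
def IsCocomm [BraidedCategory C] {A : C} (M : ComonObj' A) : Prop :=
  M.comul ≫ (β_ A A).hom = M.comul


/-! ### Auxiliary machinery for the proof -/

lemma mid4_eq_tensorμ [BraidedCategory C] (W X Y Z : C) : mid4 W X Y Z = tensorμ W X Y Z := rfl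

/-- Repackage a `ComonObj` as an object of `Comon_ C`. -/
def ComonObj'.toComon_ {A : C} (M : ComonObj' A) : Comon C where
  X := A
  comon := { counit := M.counit
             comul := M.comul
             counit_comul := M.counit_comul
             comul_counit := M.comul_counit
             comul_assoc := M.comul_assoc.symm }

section Aux2
variable [BraidedCategory C] {Y B : C}

lemma kappa_counit (MYc : ComonObj' Y) (MB : BimonObj' B) (k : Y ⟶ B)
    (hkcounit : k ≫ MB.counit = MYc.counit) :
    ((k ▷ B) ≫ MB.mul) ≫ MB.counit = (MYc.counit ⊗ₘ MB.counit) ≫ (λ_ (𝟙_ C)).hom := by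
  rw [assoc, MB.mul_counit, ← tensorHom_id k, tensorHom_comp_tensorHom_assoc, id_comp, hkcounit]

lemma kappa_comul (MY : BimonObj' Y) (MB : BimonObj' B) (k : Y ⟶ B)
    (hkcomul : k ≫ MB.comul = MY.comul ≫ (k ⊗ₘ k)) :
    ((k ▷ B) ≫ MB.mul) ≫ MB.comul =
      ((MY.comul ⊗ₘ MB.comul) ≫ tensorμ Y Y B B) ≫
        (((k ▷ B) ≫ MB.mul) ⊗ₘ ((k ▷ B) ≫ MB.mul)) := by
  rw [assoc, MB.mul_comul, mid4_eq_tensorμ]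
  calc (k ▷ B) ≫ (MB.comul ⊗ₘ MB.comul) ≫ tensorμ B B B B ≫ (MB.mul ⊗ₘ MB.mul)
      = ((k ≫ MB.comul) ⊗ₘ MB.comul) ≫ tensorμ B B B B ≫ (MB.mul ⊗ₘ MB.mul) := by
        rw [← tensorHom_id k, tensorHom_comp_tensorHom_assoc, id_comp]
    _ = (MY.comul ⊗ₘ MB.comul) ≫ (((k ⊗ₘ k) ▷ (B ⊗ B)) ≫ tensorμ B B B B) ≫
          (MB.mul ⊗ₘ MB.mul) := by
        rw [hkcomul, ← tensorHom_id (k ⊗ₘ k)]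
        rw [show ((MY.comul ≫ (k ⊗ₘ k)) ⊗ₘ MB.comul) = (MY.comul ⊗ₘ MB.comul) ≫ ((k ⊗ₘ k) ⊗ₘ 𝟙 (B ⊗ B)) by rw [tensorHom_comp_tensorHom, comp_id]]
        simp
    _ = (MY.comul ⊗ₘ MB.comul) ≫ tensorμ Y Y B B ≫ ((k ▷ B) ⊗ₘ (k ▷ B)) ≫
          (MB.mul ⊗ₘ MB.mul) := by
        rw [tensorμ_natural_left]
        simp
    _ = ((MY.comul ⊗ₘ MB.comul) ≫ tensorμ Y Y B B) ≫
          (((k ▷ B) ≫ MB.mul) ⊗ₘ ((k ▷ B) ≫ MB.mul)) := by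
        rw [tensorHom_comp_tensorHom]; simp

end Aux2


section Aux3
variable [BraidedCategory C] {Y B : C}

/-- comultiplication of a tensor product of comonoids -/
noncomputable def DD (MY : ComonObj' Y) (MB : ComonObj' B) : Y ⊗ B ⟶ (Y ⊗ B) ⊗ (Y ⊗ B) :=
  (MY.comul ⊗ₘ MB.comul) ≫ tensorμ Y Y B B

variable (MY : ComonObj' Y) (MB : ComonObj' B)

lemma DD_eq : DD MY MB = ComonObj.comul (X := (MY.toComon_ ⊗ MB.toComon_).X) := by
  letI : ComonObj Y := MY.toComon_.comon
  letI : ComonObj B := MB.toComon_.comon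
  exact (Comon.tensorObj_comul Y B).symm

lemma DD_coassoc :
    DD MY MB ≫ ((DD MY MB) ▷ (Y ⊗ B)) ≫ (α_ (Y ⊗ B) (Y ⊗ B) (Y ⊗ B)).hom =
      DD MY MB ≫ ((Y ⊗ B) ◁ DD MY MB) := by
  have := ComonObj.comul_assoc (MY.toComon_ ⊗ MB.toComon_).X
  rw [← DD_eq] at this
  exact this.symm

lemma DD_counit_left :
    DD MY MB ≫ ((((MY.counit ⊗ₘ MB.counit) ≫ (λ_ (𝟙_ C)).hom)) ▷ (Y ⊗ B)) =
      (λ_ (Y ⊗ B)).inv := by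
  have := ComonObj.counit_comul (MY.toComon_ ⊗ MB.toComon_).X
  rw [← DD_eq] at this
  exact this

/-- Applying `ε_Y` to the `Y`-part of the second tensor factor of the comultiplication. -/
lemma DD_q :
    DD MY MB ≫ ((Y ⊗ B) ◁ ((MY.counit ▷ B) ≫ (λ_ B).hom)) =
      (Y ◁ MB.comul) ≫ (α_ Y B B).inv := by
  rw [DD, assoc]
  have n := tensorμ_natural (𝟙 Y) MY.counit (𝟙 B) (𝟙 B)
  simp only [id_tensorHom, tensorHom_id, id_tensorHom_id, id_whiskerRight,
    MonoidalCategory.whiskerLeft_id, id_comp, comp_id] at n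
  calc (MY.comul ⊗ₘ MB.comul) ≫ tensorμ Y Y B B ≫ ((Y ⊗ B) ◁ ((MY.counit ▷ B) ≫ (λ_ B).hom))
      = (MY.comul ⊗ₘ MB.comul) ≫ ((Y ◁ MY.counit) ▷ (B ⊗ B)) ≫ tensorμ Y (𝟙_ C) B B ≫
          ((Y ⊗ B) ◁ (λ_ B).hom) := by
        rw [MonoidalCategory.whiskerLeft_comp]
        slice_lhs 2 3 => rw [← n]
        simp only [assoc]
    _ = ((MY.comul ≫ (Y ◁ MY.counit)) ⊗ₘ MB.comul) ≫ tensorμ Y (𝟙_ C) B B ≫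
          ((Y ⊗ B) ◁ (λ_ B).hom) := by
        rw [show ((MY.comul ≫ (Y ◁ MY.counit)) ⊗ₘ MB.comul) =
          (MY.comul ⊗ₘ MB.comul) ≫ ((Y ◁ MY.counit) ▷ (B ⊗ B)) by
            rw [← tensorHom_id (Y ◁ MY.counit), tensorHom_comp_tensorHom, comp_id]]
        simp
    _ = ((ρ_ Y).inv ⊗ₘ MB.comul) ≫ tensorμ Y (𝟙_ C) B B ≫ ((Y ⊗ B) ◁ (λ_ B).hom) := by
        rw [MY.comul_counit]
    _ = (Y ◁ MB.comul) ≫ ((ρ_ Y).inv ▷ (B ⊗ B)) ≫ tensorμ Y (𝟙_ C) B B ≫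
          ((Y ⊗ B) ◁ (λ_ B).hom) := by
        rw [← assoc, tensorHom_def' (ρ_ Y).inv MB.comul]
        simp
    _ = (Y ◁ MB.comul) ≫ (α_ Y B B).inv := by
        congr 1
        simp [tensorμ, braiding_tensorUnit_left]
        monoidal

end Aux3


section Aux4
variable [BraidedCategory C] {Y B : C} (MY : BimonObj' Y) (MB : BimonObj' B) (k : Y ⟶ B)

noncomputable def KP : Y ⊗ B ⟶ B := (k ▷ B) ≫ MB.mul

noncomputable def HH : Y ⊗ B ⟶ B ⊗ (Y ⊗ B) :=
  DD MY.toComonObj' MB.toComonObj' ≫ (KP MB k ▷ (Y ⊗ B))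

noncomputable def GG : Y ⊗ (Y ⊗ B) ⟶ (Y ⊗ B) ⊗ (Y ⊗ B) :=
  (Y ◁ HH MY MB k) ≫ (α_ Y B (Y ⊗ B)).inv

noncomputable def QQ : Y ⊗ B ⟶ B := (MY.counit ▷ B) ≫ (λ_ B).hom

noncomputable def pY : Y ⊗ B ⟶ Y := (Y ◁ MB.counit) ≫ (ρ_ Y).hom

noncomputable def LL : (Y ⊗ B) ⊗ (Y ⊗ B) ⟶ ((Y ⊗ B) ⊗ B) ⊗ (Y ⊗ B) :=
  (DD MY.toComonObj' MB.toComonObj' ▷ (Y ⊗ B)) ≫ (((Y ⊗ B) ◁ QQ MY) ▷ (Y ⊗ B))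

noncomputable def RR : (Y ⊗ B) ⊗ (Y ⊗ B) ⟶ ((Y ⊗ B) ⊗ B) ⊗ (Y ⊗ B) :=
  ((Y ⊗ B) ◁ DD MY.toComonObj' MB.toComonObj') ≫
    ((Y ⊗ B) ◁ (KP MB k ▷ (Y ⊗ B))) ≫ (α_ (Y ⊗ B) B (Y ⊗ B)).inv

noncomputable def PP : ((Y ⊗ B) ⊗ B) ⊗ (Y ⊗ B) ⟶ (Y ⊗ B) ⊗ (Y ⊗ B) :=
  ((pY MB ▷ B) ▷ (Y ⊗ B))

lemma key (hkcomul : k ≫ MB.comul = MY.comul ≫ (k ⊗ₘ k)) :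
    HH MY MB k ≫ (MB.comul ▷ (Y ⊗ B)) ≫ (α_ B B (Y ⊗ B)).hom =
      HH MY MB k ≫ (B ◁ HH MY MB k) := by
  have kc : KP MB k ≫ MB.comul =
      DD MY.toComonObj' MB.toComonObj' ≫ (KP MB k ⊗ₘ KP MB k) :=
    kappa_comul MY MB k hkcomul
  calc HH MY MB k ≫ (MB.comul ▷ (Y ⊗ B)) ≫ (α_ B B (Y ⊗ B)).hom
      = DD MY.toComonObj' MB.toComonObj' ≫ ((KP MB k ≫ MB.comul) ▷ (Y ⊗ B)) ≫
          (α_ B B (Y ⊗ B)).hom := by rw [HH]; simp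
    _ = DD MY.toComonObj' MB.toComonObj' ≫
          ((DD MY.toComonObj' MB.toComonObj' ≫ (KP MB k ⊗ₘ KP MB k)) ▷ (Y ⊗ B)) ≫
          (α_ B B (Y ⊗ B)).hom := by rw [kc]
    _ = DD MY.toComonObj' MB.toComonObj' ≫ (DD MY.toComonObj' MB.toComonObj' ▷ (Y ⊗ B)) ≫
          (α_ (Y ⊗ B) (Y ⊗ B) (Y ⊗ B)).hom ≫ (KP MB k ⊗ₘ (KP MB k ▷ (Y ⊗ B))) := by
        simp only [comp_whiskerRight, assoc]
        congr 2
        rw [← tensorHom_id (KP MB k ⊗ₘ KP MB k), associator_naturality]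
        simp [tensorHom_id]
    _ = DD MY.toComonObj' MB.toComonObj' ≫ ((Y ⊗ B) ◁ DD MY.toComonObj' MB.toComonObj') ≫
          (KP MB k ⊗ₘ (KP MB k ▷ (Y ⊗ B))) := by
        rw [reassoc_of% (DD_coassoc MY.toComonObj' MB.toComonObj')]
    _ = HH MY MB k ≫ (B ◁ HH MY MB k) := by
        rw [HH]
        simp only [MonoidalCategory.whiskerLeft_comp, assoc, tensorHom_def']
        rw [← whisker_exchange_assoc, ← whisker_exchange]

lemma claimA (hkcomul : k ≫ MB.comul = MY.comul ≫ (k ⊗ₘ k)) :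
    GG MY MB k ≫ LL MY MB = GG MY MB k ≫ RR MY MB k := by
  have key2 : HH MY MB k ≫ (MB.comul ▷ (Y ⊗ B)) =
      HH MY MB k ≫ (B ◁ HH MY MB k) ≫ (α_ B B (Y ⊗ B)).inv := by
    calc HH MY MB k ≫ (MB.comul ▷ (Y ⊗ B))
        = (HH MY MB k ≫ (MB.comul ▷ (Y ⊗ B)) ≫ (α_ B B (Y ⊗ B)).hom) ≫
            (α_ B B (Y ⊗ B)).inv := by simp
      _ = (HH MY MB k ≫ (B ◁ HH MY MB k)) ≫ (α_ B B (Y ⊗ B)).inv := by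
          rw [key MY MB k hkcomul]
      _ = HH MY MB k ≫ (B ◁ HH MY MB k) ≫ (α_ B B (Y ⊗ B)).inv := by simp
  calc GG MY MB k ≫ LL MY MB
      = (Y ◁ HH MY MB k) ≫ (α_ Y B (Y ⊗ B)).inv ≫
          (((Y ◁ MB.comul) ≫ (α_ Y B B).inv) ▷ (Y ⊗ B)) := by
        rw [GG, LL, QQ]
        simp only [assoc]
        rw [← comp_whiskerRight, DD_q MY.toComonObj' MB.toComonObj']
    _ = (Y ◁ (HH MY MB k ≫ (MB.comul ▷ (Y ⊗ B)))) ≫ (α_ Y (B ⊗ B) (Y ⊗ B)).inv ≫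
          ((α_ Y B B).inv ▷ (Y ⊗ B)) := by monoidal
    _ = (Y ◁ (HH MY MB k ≫ (B ◁ HH MY MB k) ≫ (α_ B B (Y ⊗ B)).inv)) ≫
          (α_ Y (B ⊗ B) (Y ⊗ B)).inv ≫ ((α_ Y B B).inv ▷ (Y ⊗ B)) := by rw [key2]
    _ = (Y ◁ (HH MY MB k ≫ (B ◁ HH MY MB k))) ≫ (Y ◁ (α_ B B (Y ⊗ B)).inv) ≫
          (α_ Y (B ⊗ B) (Y ⊗ B)).inv ≫ ((α_ Y B B).inv ▷ (Y ⊗ B)) := by simp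
    _ = (Y ◁ HH MY MB k) ≫ (α_ Y B (Y ⊗ B)).inv ≫ ((Y ⊗ B) ◁ HH MY MB k) ≫
          (α_ (Y ⊗ B) B (Y ⊗ B)).inv := by monoidal
    _ = GG MY MB k ≫ RR MY MB k := by
        rw [GG, RR, HH]
        simp only [MonoidalCategory.whiskerLeft_comp, assoc]

lemma claimB (hkcounit : k ≫ MB.counit = MY.counit) :
    GG MY MB k ≫ (pY MB ▷ (Y ⊗ B)) = 𝟙 (Y ⊗ (Y ⊗ B)) := by
  have h1 : KP MB k ≫ MB.counit =
      (MY.toComonObj'.counit ⊗ₘ MB.counit) ≫ (λ_ (𝟙_ C)).hom :=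
    kappa_counit MY.toComonObj' MB k hkcounit
  have h2 : HH MY MB k ≫ (MB.counit ▷ (Y ⊗ B)) = (λ_ (Y ⊗ B)).inv := by
    rw [HH, assoc, ← comp_whiskerRight, h1]
    exact DD_counit_left MY.toComonObj' MB.toComonObj'
  calc GG MY MB k ≫ (pY MB ▷ (Y ⊗ B))
      = (Y ◁ (HH MY MB k ≫ (MB.counit ▷ (Y ⊗ B)))) ≫ (α_ Y (𝟙_ C) (Y ⊗ B)).inv ≫
          ((ρ_ Y).hom ▷ (Y ⊗ B)) := by
        rw [GG, pY]; monoidal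
    _ = (Y ◁ (λ_ (Y ⊗ B)).inv) ≫ (α_ Y (𝟙_ C) (Y ⊗ B)).inv ≫
          ((ρ_ Y).hom ▷ (Y ⊗ B)) := by rw [h2]
    _ = 𝟙 (Y ⊗ (Y ⊗ B)) := by monoidal

lemma claimLP : LL MY MB ≫ PP MB = 𝟙 ((Y ⊗ B) ⊗ (Y ⊗ B)) := by
  have inner : DD MY.toComonObj' MB.toComonObj' ≫
      (((Y ⊗ B) ◁ QQ MY) ≫ (pY MB ▷ B)) = 𝟙 (Y ⊗ B) := by
    rw [← assoc, QQ, DD_q MY.toComonObj' MB.toComonObj', assoc, pY]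
    calc (Y ◁ MB.comul) ≫ (α_ Y B B).inv ≫ (((Y ◁ MB.counit) ≫ (ρ_ Y).hom) ▷ B)
        = (Y ◁ (MB.comul ≫ (MB.counit ▷ B))) ≫ (α_ Y (𝟙_ C) B).inv ≫
            ((ρ_ Y).hom ▷ B) := by monoidal
      _ = (Y ◁ (λ_ B).inv) ≫ (α_ Y (𝟙_ C) B).inv ≫ ((ρ_ Y).hom ▷ B) := by
          rw [MB.counit_comul]
      _ = 𝟙 (Y ⊗ B) := by monoidal
  rw [LL, PP]
  simp only [assoc]
  rw [← comp_whiskerRight, ← comp_whiskerRight, inner]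
  simp

lemma claimRP : RR MY MB k ≫ PP MB = (pY MB ▷ (Y ⊗ B)) ≫ GG MY MB k := by
  rw [RR, PP, GG]
  simp only [assoc]
  calc ((Y ⊗ B) ◁ DD MY.toComonObj' MB.toComonObj') ≫
        ((Y ⊗ B) ◁ (KP MB k ▷ (Y ⊗ B))) ≫ (α_ (Y ⊗ B) B (Y ⊗ B)).inv ≫
        ((pY MB ▷ B) ▷ (Y ⊗ B))
      = ((Y ⊗ B) ◁ HH MY MB k) ≫ (pY MB ▷ (B ⊗ (Y ⊗ B))) ≫
          (α_ Y B (Y ⊗ B)).inv := by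
        rw [HH]; simp only [MonoidalCategory.whiskerLeft_comp, assoc]; monoidal
    _ = (pY MB ▷ (Y ⊗ B)) ≫ (Y ◁ HH MY MB k) ≫ (α_ Y B (Y ⊗ B)).inv := by
        rw [whisker_exchange_assoc]

end Aux4

theorem statement17 [SymmetricCategory C] {B Y E : C}
    (MB : BimonObj' B) (hcoc : IsCocomm MB.toComonObj')
    (MY : BimonObj' Y)
    (k : Y ⟶ B) (hk : IsBimonHom MY MB k)
    (hkc : MY.comul ≫ (k ▷ Y) = MY.comul ≫ (β_ Y Y).hom ≫ (k ▷ Y))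
    (j : E ⟶ (Y ⊗ B) ⊗ (Y ⊗ B))
    (hw : j ≫ ((((MY.comul ⊗ₘ MB.comul) ≫ mid4 Y Y B B) ▷ (Y ⊗ B)) ≫
        (((Y ⊗ B) ◁ ((MY.counit ▷ B) ≫ (λ_ B).hom)) ▷ (Y ⊗ B))) =
      j ≫ (((Y ⊗ B) ◁ ((MY.comul ⊗ₘ MB.comul) ≫ mid4 Y Y B B)) ≫
        ((Y ⊗ B) ◁ (((k ▷ B) ≫ MB.mul) ▷ (Y ⊗ B))) ≫
        (α_ (Y ⊗ B) B (Y ⊗ B)).inv))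
    (hE : IsLimit (Fork.ofι j hw)) :
    IsIso (j ≫ (((Y ◁ MB.counit) ≫ (ρ_ Y).hom) ▷ (Y ⊗ B))) := by
  obtain ⟨⟨hkmul, hkone⟩, hkcomul, hkcounit⟩ := hk
  have hw' : j ≫ LL MY MB = j ≫ RR MY MB k := hw
  have hmono : Mono j := by
    have := mono_of_isLimit_fork hE
    simpa using this
  obtain ⟨ψ, hψ⟩ := Fork.IsLimit.lift' hE (GG MY MB k) (claimA MY MB k hkcomul)
  simp only [Fork.ι_ofι] at hψ
  have hC : j ≫ (pY MB ▷ (Y ⊗ B)) ≫ GG MY MB k = j := by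
    calc j ≫ (pY MB ▷ (Y ⊗ B)) ≫ GG MY MB k
        = j ≫ RR MY MB k ≫ PP MB := by rw [← claimRP]
      _ = (j ≫ LL MY MB) ≫ PP MB := by rw [← assoc, ← hw']
      _ = j ≫ (LL MY MB ≫ PP MB) := by rw [assoc]
      _ = j := by rw [claimLP]; simp
  show IsIso (j ≫ (pY MB ▷ (Y ⊗ B)))
  refine ⟨ψ, ?_, ?_⟩
  · rw [← cancel_mono j]
    simp only [assoc, id_comp, hψ]
    exact hC
  · rw [← assoc, hψ]
    exact claimB MY MB k hkcounit
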